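/- Let μ be a probability measure on ℝ with finite first moment (∫ |y| dμ(y) < ∞), and let F(x) = μ((-∞, x]) denote its cumulative distribution function. Then for every a ∈ ℝ, the partial first moment satisfies ∫_{(-∞, a]} y dμ(y) = a·F(a) − ∫_{-∞}^{a} F(y) dy, where the integral of F over (−∞, a] is finite. -/

import Mathlib

open MeasureTheory Set ENNReal in

/-- **Partial first moment identity.**
For a probability measure `μ` on `ℝ` with finite first moment and CDF
`F x = μ((-∞, x])`, we have for every `a`:
`∫_{(-∞, a]} y dμ(y) = a·F(a) − ∫_{-∞}^{a} F(y) dy`,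
and the (Lebesgue) integral of `F` over `(-∞, a]` is finite. -/
theorem partial_first_moment
    (μ : Measure ℝ) [IsProbabilityMeasure μ]
    (hint : Integrable (fun y : ℝ => y) μ)
    (F : ℝ → ℝ) (hF : ∀ x, F x = (μ (Set.Iic x)).toReal) :
    ∀ a : ℝ,
      IntegrableOn F (Set.Iic a) volume ∧
      ∫ y in Set.Iic a, y ∂μ = a * F a - ∫ y in Set.Iic a, F y := by
  intro a
  -- measurability of F
  have hFnn : ∀ x, 0 ≤ F x := fun x => by rw [hF]; exact ENNReal.toReal_nonneg
  have hFmeas : Measurable F := by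
    have hmono : Monotone F := fun x y hxy => by
      rw [hF x, hF y]
      exact ENNReal.toReal_mono (measure_ne_top μ _)
        (measure_mono (Iic_subset_Iic.2 hxy))
    exact hmono.measurable
  -- key Fubini identity
  have key : ∫⁻ t in Iic a, μ (Iic t) ∂volume = ∫⁻ y, ENNReal.ofReal (a - y) ∂μ := by
    have hswap : ∫⁻ t in Iic a, ∫⁻ y, (Iic t).indicator (fun _ => (1:ℝ≥0∞)) y ∂μ ∂volume
        = ∫⁻ y, ∫⁻ t in Iic a, (Iic t).indicator (fun _ => (1:ℝ≥0∞)) y ∂volume ∂μ := by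
      apply lintegral_lintegral_swap
      have hs : MeasurableSet {p : ℝ × ℝ | p.2 ≤ p.1} :=
        measurableSet_le measurable_snd measurable_fst
      have : (Function.uncurry fun t y => (Iic t).indicator (fun _ => (1:ℝ≥0∞)) y)
          = {p : ℝ × ℝ | p.2 ≤ p.1}.indicator (fun _ => (1:ℝ≥0∞)) := by
        ext p
        by_cases h : p.2 ≤ p.1 <;> simp [Function.uncurry, Set.indicator_apply, h]
      rw [this]
      exact (measurable_const.indicator hs).aemeasurable
    calc ∫⁻ t in Iic a, μ (Iic t) ∂volume
        = ∫⁻ t in Iic a, ∫⁻ y, (Iic t).indicator (fun _ => (1:ℝ≥0∞)) y ∂μ ∂volume := by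
          simp [lintegral_indicator_one measurableSet_Iic]
      _ = ∫⁻ y, ∫⁻ t in Iic a, (Iic t).indicator (fun _ => (1:ℝ≥0∞)) y ∂volume ∂μ := hswap
      _ = ∫⁻ y, ENNReal.ofReal (a - y) ∂μ := by
          refine lintegral_congr fun y => ?_
          have : ∀ t, (Iic t).indicator (fun _ => (1:ℝ≥0∞)) y
              = (Ici y).indicator (fun _ => (1:ℝ≥0∞)) t := by
            intro t; by_cases h : y ≤ t <;> simp [Set.indicator_apply, h]
          simp_rw [this]
          rw [lintegral_indicator measurableSet_Ici, setLIntegral_one,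
            Measure.restrict_apply measurableSet_Ici, Ici_inter_Iic, Real.volume_Icc]
  -- the nonnegative integrand g
  set g : ℝ → ℝ := fun y => max (a - y) 0 with hg
  have hgnn : ∀ y, 0 ≤ g y := fun y => le_max_right _ _
  have hgint : Integrable g μ := ((integrable_const a).sub hint).pos_part
  have hofg : ∀ y, ENNReal.ofReal (a - y) = ENNReal.ofReal (g y) := by
    intro y
    rcases le_total 0 (a - y) with h | h
    · rw [hg]; simp [max_eq_left h]
    · rw [ENNReal.ofReal_eq_zero.2 h, hg]
      simp [max_eq_right h]
  have hlin : ∫⁻ y, ENNReal.ofReal (a - y) ∂μ = ENNReal.ofReal (∫ y, g y ∂μ) := by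
    simp_rw [hofg]
    exact (ofReal_integral_eq_lintegral_ofReal hgint
      (Filter.Eventually.of_forall hgnn)).symm
  -- the lintegral of F over Iic a
  have hFof : ∀ᵐ t ∂(volume.restrict (Iic a)), ENNReal.ofReal (F t) = μ (Iic t) := by
    filter_upwards with t
    rw [hF, ENNReal.ofReal_toReal (measure_ne_top μ _)]
  have hFl : ∫⁻ t in Iic a, ENNReal.ofReal (F t) ∂volume
      = ENNReal.ofReal (∫ y, g y ∂μ) := by
    rw [lintegral_congr_ae hFof, key, hlin]
  -- integrability of F on Iic a
  have hFint : IntegrableOn F (Iic a) volume := by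
    refine ⟨hFmeas.aestronglyMeasurable.restrict, ?_⟩
    rw [hasFiniteIntegral_iff_ofReal (Filter.Eventually.of_forall hFnn), hFl]
    exact ENNReal.ofReal_lt_top
  refine ⟨hFint, ?_⟩
  -- value of ∫ F over Iic a
  have hFval : ∫ t in Iic a, F t = ∫ y, g y ∂μ := by
    rw [integral_eq_lintegral_of_nonneg_ae (Filter.Eventually.of_forall hFnn)
      hFmeas.aestronglyMeasurable.restrict, hFl,
      ENNReal.toReal_ofReal (integral_nonneg hgnn)]
  -- split ∫ g
  have hsplit : ∫ y, g y ∂μ = ∫ y in Iic a, (a - y) ∂μ := by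
    rw [← integral_add_compl measurableSet_Iic hgint, compl_Iic]
    have h0 : ∫ y in Ioi a, g y ∂μ = 0 := by
      have he : ∀ y ∈ Ioi a, g y = 0 := fun y hy =>
        max_eq_right (by simp only [mem_Ioi] at hy; linarith)
      rw [setIntegral_congr_fun measurableSet_Ioi he]
      simp
    have h1 : ∫ y in Iic a, g y ∂μ = ∫ y in Iic a, (a - y) ∂μ :=
      setIntegral_congr_fun measurableSet_Iic
        (fun y hy => max_eq_left (by simp at hy; linarith))
    rw [h0, h1, add_zero]
  have hsub : ∫ y in Iic a, (a - y) ∂μ = a * F a - ∫ y in Iic a, y ∂μ := by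
    rw [integral_sub (integrableOn_const (s := Iic a) (C := a) (measure_ne_top μ _))
      hint.integrableOn, setIntegral_const, measureReal_def, hF, smul_eq_mul, mul_comm]
  have := hFval.trans (hsplit.trans hsub)
  linarith
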